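/- Let B ⊆ ℕ be an infinite set with ∑_{n∈B} 1/n < ∞. Then the set of subsets A of B for which ∑_{n∈A} 1/n is rational is a countable union of nowhere dense sets (i.e., is meagre) in the Cantor space {0,1}^B with the product topology. -/
import Mathlib


open scoped Classical

/-- The set of subsets `A` of `B` for which `∑_{n ∈ A} 1/n` is rational is meagre
in the Cantor space `{0,1}^B`. -/
theorem stmt_0 (B : Set ℕ) (hB : B.Infinite)
    (hsum : Summable fun n : B => (1 : ℝ) / (n : ℕ)) :
    IsMeagre {A : B → Bool |
      ∃ q : ℚ, ∑' n : B, (if A n then (1 : ℝ) / (n : ℕ) else 0) = q} := by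
  have hBinf : Infinite B := hB.to_subtype
  set f : (B → Bool) → ℝ := fun A => ∑' n : B, (if A n then (1 : ℝ) / (n : ℕ) else 0) with hf
  -- continuity of f
  have hcont : Continuous f := by
    apply continuous_tsum (u := fun n : B => (1 : ℝ) / (n : ℕ))
      (f := fun (n : B) (A : B → Bool) => if A n then (1 : ℝ) / (n : ℕ) else 0)
    · intro n
      exact Continuous.comp (continuous_of_discreteTopology
        (f := fun b : Bool => if b then (1 : ℝ) / (n : ℕ) else 0)) (continuous_apply n)
    · exact hsum
    · intro n x
      have hnn : (0 : ℝ) ≤ 1 / (n : ℕ) := by positivity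
      split_ifs
      · rw [Real.norm_eq_abs, abs_of_nonneg hnn]
      · simpa using hnn
  -- summability for each A
  have hsummA : ∀ A : B → Bool, Summable fun n : B => (if A n then (1 : ℝ) / (n : ℕ) else 0) := by
    intro A
    apply Summable.of_nonneg_of_le _ _ hsum
    · intro n; split_ifs <;> positivity
    · intro n; split_ifs with h
      · exact le_rfl
      · positivity
  rw [isMeagre_iff_countable_union_isNowhereDense]
  refine ⟨Set.range (fun q : ℚ => {A : B → Bool | f A = (q : ℝ)}), ?_, Set.countable_range _, ?_⟩
  · rintro t ⟨q, rfl⟩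
    have hclosed : IsClosed {A : B → Bool | f A = (q : ℝ)} :=
      isClosed_singleton.preimage hcont
    rw [hclosed.isNowhereDense_iff]
    rw [Set.eq_empty_iff_forall_notMem]
    intro A hA
    obtain ⟨I, u, hu, hsub⟩ := isOpen_pi_iff.mp isOpen_interior A hA
    -- pick a coordinate n0 outside I with (n0 : ℕ) ≠ 0
    have hfin : ((↑I : Set B) ∪ {n : B | (n : ℕ) = 0}).Finite := by
      apply I.finite_toSet.union
      apply Set.Subsingleton.finite
      intro a ha b hb
      exact Subtype.coe_injective (ha.trans hb.symm)
    obtain ⟨n0, hn0⟩ := hfin.infinite_compl.nonempty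
    simp only [Set.mem_compl_iff, Set.mem_union, Set.mem_setOf_eq, not_or] at hn0
    obtain ⟨hn0I, hn0z⟩ := hn0
    have hpos : (0 : ℝ) < 1 / ((n0 : ℕ) : ℝ) := by
      have : 0 < (n0 : ℕ) := Nat.pos_of_ne_zero hn0z
      positivity
    set A' := Function.update A n0 (!A n0) with hA'
    have hA'mem : A' ∈ {A : B → Bool | f A = (q : ℝ)} := by
      apply interior_subset
      apply hsub
      intro i hi
      have : A' i = A i := Function.update_of_ne (by rintro rfl; exact hn0I hi) _ _
      rw [this]
      exact (hu i hi).2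
    -- compute f A' = f A + c
    set c : ℝ := (if !A n0 then (1 : ℝ) / (n0 : ℕ) else 0)
      - (if A n0 then (1 : ℝ) / (n0 : ℕ) else 0) with hc
    have hcn : c ≠ 0 := by
      rcases Bool.eq_false_or_eq_true (A n0) with h | h <;>
        simp [hc, h] <;> exact hn0z
    have hpt : ∀ n : B, (if A' n then (1 : ℝ) / (n : ℕ) else 0)
        = (if A n then (1 : ℝ) / (n : ℕ) else 0) + (if n = n0 then c else 0) := by
      intro n
      by_cases h : n = n0
      · subst h
        simp [hA', Function.update_self, hc]
      · simp [hA', Function.update_of_ne h, h]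
    have hfA' : f A' = f A + c := by
      simp only [hf]
      calc ∑' n : B, (if A' n then (1 : ℝ) / (n : ℕ) else 0)
          = ∑' n : B, ((if A n then (1 : ℝ) / (n : ℕ) else 0) + (if n = n0 then c else 0)) := by
            exact tsum_congr hpt
        _ = (∑' n : B, (if A n then (1 : ℝ) / (n : ℕ) else 0))
            + ∑' n : B, (if n = n0 then c else 0) :=
            Summable.tsum_add (hsummA A) (hasSum_ite_eq n0 c).summable
        _ = (∑' n : B, (if A n then (1 : ℝ) / (n : ℕ) else 0)) + c := by
            rw [(hasSum_ite_eq n0 c).tsum_eq]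
    have h1 : f A = (q : ℝ) := interior_subset (s := {A : B → Bool | f A = (q : ℝ)}) hA
    have h2 : f A' = (q : ℝ) := hA'mem
    rw [hfA', h1] at h2
    exact hcn (by linarith)
  · intro A hA
    obtain ⟨q, hq⟩ := hA
    exact Set.mem_sUnion.mpr ⟨_, ⟨q, rfl⟩, hq⟩
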